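/- For every i ≥ 0 one has Y_i = π^{i+1}·B_i^⊥ ∩ B_i, where the intersection is taken inside V and π^{i+1}·B_i^⊥ = {π^{i+1}x : x ∈ B_i^⊥}. Consequently every isometry g of (L,h) satisfies g(Y_i) = Y_i. -/

import Mathlib

/-- For a subset `M ⊆ V`, the "dual" set `M^⊥ = {x ∈ V : H(x,M) ⊆ B}`. -/
def perpSet (B : Type*) {E V : Type*} [CommRing B] [Field E] [Algebra B E]
    [AddCommGroup V] [Module E V] (H : V → V → E) (S : Set V) : Set V :=
  {x | ∀ y ∈ S, ∃ b : B, H x y = algebraMap B E b}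

/-- `A_i = {x ∈ L : h(x,L) ⊆ π^i B}`, viewed inside `V`. -/
def AiSetV {B E V : Type*} [CommRing B] [Field E] [Algebra B E]
    [AddCommGroup V] [Module E V] [Module B V]
    (L : Submodule B V) (π : B) (H : V → V → E) (i : ℕ) : Set V :=
  {x | x ∈ L ∧ ∀ w ∈ L, ∃ b : B, H x w = algebraMap B E (π ^ i * b)}

/-- `B_i = {x ∈ A_i : h(x,x) ∈ 2^{m+1} A}` where `m = ⌈i/2⌉`, viewed inside `V`. -/
def BiSetV (A : Type*) {B E V : Type*} [CommRing A] [CommRing B] [Field E]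
    [Algebra B E] [Algebra A E] [AddCommGroup V] [Module E V] [Module B V]
    (L : Submodule B V) (π : B) (H : V → V → E) (i : ℕ) : Set V :=
  {x | x ∈ AiSetV L π H i ∧ ∃ a : A, H x x = algebraMap A E (2 ^ ((i + 1) / 2 + 1) * a)}

/-- `Y_i = {x ∈ B_i : h(x,B_i) ⊆ π^{i+1} B}`, viewed inside `V`. -/
def YiSetV (A : Type*) {B E V : Type*} [CommRing A] [CommRing B] [Field E]
    [Algebra B E] [Algebra A E] [AddCommGroup V] [Module E V] [Module B V]
    (L : Submodule B V) (π : B) (H : V → V → E) (i : ℕ) : Set V :=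
  {x | x ∈ BiSetV A L π H i ∧
    ∀ w ∈ BiSetV A L π H i, ∃ b : B, H x w = algebraMap B E (π ^ (i + 1) * b)}

/-- `Y_i = π^{i+1}·B_i^⊥ ∩ B_i` inside `V`; consequently every isometry of
`(L,h)` stabilizes `Y_i`. -/
theorem Yi_eq_scaled_dual_inter
    {A : Type*} [CommRing A] [IsDomain A] [IsDiscreteValuationRing A] [CharZero A]
    (hmax : IsLocalRing.maximalIdeal A = Ideal.span {2})
    [IsAdicComplete (IsLocalRing.maximalIdeal A) A]
    [CharP (IsLocalRing.ResidueField A) 2]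
    [PerfectRing (IsLocalRing.ResidueField A) 2]
    (δ : A) (hδunit : IsUnit δ) (hδ1 : (2 : A) ∣ (δ - 1))
    {B : Type*} [CommRing B] [IsDomain B] [Algebra A B]
    (π : B) (hπ : π ^ 2 = algebraMap A B (2 * δ))
    (σ : B ≃ₐ[A] B) (hσπ : σ π = -π) (hσinv : ∀ b : B, σ (σ b) = b)
    (hBfree : ∀ b : B, ∃! p : A × A, b = algebraMap A B p.1 + algebraMap A B p.2 * π)
    {E : Type*} [Field E] [Algebra B E] [IsFractionRing B E]
    [Algebra A E] [IsScalarTower A B E]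
    (σE : E ≃+* E) (hσE : ∀ b : B, σE (algebraMap B E b) = algebraMap B E (σ b))
    {V : Type*} [AddCommGroup V] [Module E V] [Module B V] [IsScalarTower B E V]
    (H : V → V → E)
    (Hadd : ∀ x y z : V, H (x + y) z = H x z + H y z)
    (Hsmul : ∀ (a b : E) (v w : V), H (a • v) (b • w) = σE a * b * H v w)
    (Hsymm : ∀ v w : V, H w v = σE (H v w))
    (Hnd : ∀ v : V, (∀ w : V, H v w = 0) → v = 0)
    (L : Submodule B V) [Module.Free B L] [Module.Finite B L]
    (hLspan : Submodule.span E (L : Set V) = ⊤)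
    (hLB : ∀ x ∈ L, ∀ y ∈ L, ∃ b : B, H x y = algebraMap B E b)
    (i : ℕ) :
    YiSetV A L π H i
      = {v : V | ∃ x ∈ perpSet B H (BiSetV A L π H i), v = (π ^ (i + 1)) • x}
          ∩ BiSetV A L π H i ∧
    ∀ (g : V ≃ₗ[E] V), (∀ x y : V, H (g x) (g y) = H x y) →
      g '' (L : Set V) = (L : Set V) →
      g '' YiSetV A L π H i = YiSetV A L π H i := by

  -- injectivity of algebraMap A B from uniqueness of representations
  have hinjAB : Function.Injective (algebraMap A B) := by
    intro a b hab
    obtain ⟨p, hp, hup⟩ := hBfree (algebraMap A B a)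
    have h1 := hup (a, 0) (by simp)
    have h2 := hup (b, 0) (by simp [hab])
    simpa using congrArg Prod.fst (h1.trans h2.symm)
  have hπ0 : π ≠ 0 := by
    intro h
    have h2δ : (2 * δ : A) ≠ 0 := mul_ne_zero two_ne_zero hδunit.ne_zero
    apply h2δ
    apply hinjAB
    rw [map_zero, ← hπ, h]
    ring
  have hπE : algebraMap B E π ≠ 0 := fun h => hπ0 (IsFractionRing.injective B E (by simpa using h))
  set πE := algebraMap B E π with hπEdef
  have hsmul1 : ∀ (a : E) (v w : V), H (a • v) w = σE a * H v w := by
    intro a v w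
    have := Hsmul a 1 v w
    simpa using this
  have hσπE : σE πE = -πE := by
    rw [hπEdef, hσE, hσπ, map_neg]
  constructor
  · ext v
    constructor
    · rintro ⟨hvS, hY⟩
      refine ⟨⟨(πE ^ (i+1))⁻¹ • v, ?_, ?_⟩, hvS⟩
      · intro y hy
        obtain ⟨b, hb⟩ := hY y hy
        refine ⟨(-1)^(i+1) * b, ?_⟩
        rw [hsmul1, hb, map_inv₀, map_pow, hσπE, map_mul, map_pow, map_mul, map_pow,
          map_neg, map_one]
        have hne : ((-1 : E)) ^ (i+1) * πE ^ (i+1) ≠ 0 :=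
          mul_ne_zero (pow_ne_zero _ (by norm_num)) (pow_ne_zero _ hπE)
        rw [neg_pow, mul_inv]
        field_simp
        rw [← hπEdef]
        have h1 : ((-1 : E)) ^ (i+1) * (-1 : E) ^ (i+1) = 1 := by
          rw [← pow_add, ← two_mul, pow_mul]
          norm_num
        linear_combination (-(algebraMap B E b * πE ^ (i+1))) * h1
      · rw [← algebraMap_smul E (π ^ (i+1)) ((πE ^ (i+1))⁻¹ • v), map_pow, smul_smul,
          mul_inv_cancel₀ (pow_ne_zero _ hπE), one_smul]
    · rintro ⟨⟨x, hx, hvx⟩, hvS⟩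
      refine ⟨hvS, ?_⟩
      intro w hw
      obtain ⟨b, hb⟩ := hx w hw
      refine ⟨(-1)^(i+1) * b, ?_⟩
      rw [hvx, ← algebraMap_smul E (π ^ (i+1)) x, hsmul1, hb, map_pow, map_pow, hσπE,
        neg_pow, map_mul, map_mul, map_pow, map_pow, map_neg, map_one, ← hπEdef]
      ring
  · intro g hg hgL
    have hgL1 : ∀ x ∈ L, g x ∈ L := by
      intro x hx
      have : g x ∈ g '' (L : Set V) := ⟨x, hx, rfl⟩
      rwa [hgL] at this
    have hgL2 : ∀ x ∈ L, g.symm x ∈ L := by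
      intro x hx
      have hx' : x ∈ (L : Set V) := hx
      rw [← hgL] at hx'
      obtain ⟨y, hy, rfl⟩ := hx'
      simpa using hy
    have keyB : ∀ (e : V ≃ₗ[E] V), (∀ x y : V, H (e x) (e y) = H x y) →
        (∀ x ∈ L, e x ∈ L) → (∀ x ∈ L, e.symm x ∈ L) →
        ∀ v ∈ BiSetV A L π H i, e v ∈ BiSetV A L π H i := by
      rintro e he he1 he2 v ⟨⟨hvL, hA⟩, a, ha⟩
      refine ⟨⟨he1 v hvL, ?_⟩, a, by rw [he]; exact ha⟩
      intro w hw
      obtain ⟨b, hb⟩ := hA (e.symm w) (he2 w hw)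
      refine ⟨b, ?_⟩
      have : H (e v) (e (e.symm w)) = H v (e.symm w) := he v (e.symm w)
      rw [e.apply_symm_apply] at this
      rw [this, hb]
    have keyY : ∀ (e : V ≃ₗ[E] V), (∀ x y : V, H (e x) (e y) = H x y) →
        (∀ x ∈ L, e x ∈ L) → (∀ x ∈ L, e.symm x ∈ L) →
        ∀ v ∈ YiSetV A L π H i, e v ∈ YiSetV A L π H i := by
      rintro e he he1 he2 v ⟨hvB, hY⟩
      have he' : ∀ x y : V, H (e.symm x) (e.symm y) = H x y := by
        intro x y
        have := he (e.symm x) (e.symm y)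
        simpa using this.symm
      refine ⟨keyB e he he1 he2 v hvB, ?_⟩
      intro w hw
      have hw' : e.symm w ∈ BiSetV A L π H i :=
        keyB e.symm he' he2 (by simpa using he1) w hw
      obtain ⟨b, hb⟩ := hY (e.symm w) hw'
      refine ⟨b, ?_⟩
      have : H (e v) (e (e.symm w)) = H v (e.symm w) := he v (e.symm w)
      rw [e.apply_symm_apply] at this
      rw [this, hb]
    have hg' : ∀ x y : V, H (g.symm x) (g.symm y) = H x y := by
      intro x y
      have := hg (g.symm x) (g.symm y)
      simpa using this.symm
    ext v
    constructor
    · rintro ⟨w, hw, rfl⟩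
      exact keyY g hg hgL1 hgL2 w hw
    · intro hv
      exact ⟨g.symm v, keyY g.symm hg' hgL2 (by simpa using hgL1) v hv,
        g.apply_symm_apply v⟩
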